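/- For all real β > 0 and τ ≥ 0, (1/π) ∫₀^{τ²} e^{−2βE} √E dE + (τ/π) ∫_{τ²}^∞ e^{−2βE} dE = Erf(τ√(2β)) / (2(2β)^{3/2} √π). -/

import Mathlib

open MeasureTheory

/-- The error function `Erf x = (2/√π) ∫₀^x e^{−t²} dt`. -/
noncomputable def erf (x : ℝ) : ℝ :=
  (2 / Real.sqrt Real.pi) * ∫ t in (0:ℝ)..x, Real.exp (-t^2)

lemma ioi_exp_integral (β c : ℝ) (hβ : 0 < β) :
    ∫ E in Set.Ioi c, Real.exp (-2*β*E) = Real.exp (-2*β*c) / (2*β) := by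
  have ha : (0:ℝ) < 2*β := by linarith
  have hderiv : ∀ x ∈ Set.Ici c,
      HasDerivAt (fun x => -Real.exp (-2*β*x) / (2*β)) (Real.exp (-2*β*x)) x := by
    intro x _
    have h : HasDerivAt (fun x : ℝ => -2*β*x) (-2*β) x := by
      simpa using (hasDerivAt_id x).const_mul (-2*β)
    have := (h.exp.neg).div_const (2*β)
    refine this.congr_deriv ?_
    field_simp
  have hint : IntegrableOn (fun x => Real.exp (-2*β*x)) (Set.Ioi c) := by
    have := exp_neg_integrableOn_Ioi c ha
    simpa [neg_mul, mul_assoc] using this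
  have htend : Filter.Tendsto (fun x => -Real.exp (-2*β*x) / (2*β))
      Filter.atTop (nhds 0) := by
    have h1 : Filter.Tendsto (fun x : ℝ => 2*β*x) Filter.atTop Filter.atTop :=
      Filter.Tendsto.const_mul_atTop ha Filter.tendsto_id
    have h2 : Filter.Tendsto (fun x : ℝ => Real.exp (-(2*β*x))) Filter.atTop (nhds 0) :=
      Real.tendsto_exp_neg_atTop_nhds_zero.comp h1
    have h3 := (h2.neg).div_const (2*β)
    simpa [neg_mul, mul_assoc] using h3
  have := MeasureTheory.integral_Ioi_of_hasDerivAt_of_tendsto' hderiv hint htend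
  rw [this]
  ring

lemma key_identity (β τ : ℝ) (hβ : 0 < β) (hτ : 0 ≤ τ) :
    (∫ E in (0:ℝ)..τ^2, Real.exp (-2*β*E) * Real.sqrt E) +
      τ * (Real.exp (-2*β*τ^2) / (2*β))
      = (∫ t in (0:ℝ)..τ * Real.sqrt (2*β), Real.exp (-t^2)) / ((2*β) * Real.sqrt (2*β)) := by
  have ha : (0:ℝ) < 2*β := by linarith
  have hsa : 0 < Real.sqrt (2*β) := Real.sqrt_pos.mpr ha
  set f : ℝ → ℝ := fun x =>
    (∫ E in (0:ℝ)..x^2, Real.exp (-2*β*E) * Real.sqrt E) +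
      x * (Real.exp (-2*β*x^2) / (2*β)) with hf_def
  set g : ℝ → ℝ := fun x =>
    (∫ t in (0:ℝ)..x * Real.sqrt (2*β), Real.exp (-t^2)) / ((2*β) * Real.sqrt (2*β))
    with hg_def
  have hcont1 : Continuous (fun E : ℝ => Real.exp (-2*β*E) * Real.sqrt E) :=
    (Real.continuous_exp.comp (by continuity)).mul Real.continuous_sqrt
  have hcont2 : Continuous (fun t : ℝ => Real.exp (-t^2)) :=
    Real.continuous_exp.comp (by continuity)
  -- derivative of f for x ≥ 0
  have hfderiv : ∀ x : ℝ, 0 ≤ x → HasDerivAt f (Real.exp (-2*β*x^2) / (2*β)) x := by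
    intro x hx
    have hI1 : HasDerivAt (fun y => ∫ E in (0:ℝ)..y, Real.exp (-2*β*E) * Real.sqrt E)
        (Real.exp (-2*β*x^2) * Real.sqrt (x^2)) (x^2) :=
      intervalIntegral.integral_hasDerivAt_right (hcont1.intervalIntegrable _ _)
        hcont1.aestronglyMeasurable.stronglyMeasurableAtFilter hcont1.continuousAt
    have hsq : HasDerivAt (fun y : ℝ => y^2) (2*x) x := by
      simpa using hasDerivAt_pow 2 x
    have h1' := HasDerivAt.comp_of_eq (x := x) (hh₂ := hI1) (hh := hsq) rfl
    have h1 : HasDerivAt (fun y => ∫ E in (0:ℝ)..y^2, Real.exp (-2*β*E) * Real.sqrt E)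
        (Real.exp (-2*β*x^2) * Real.sqrt (x^2) * (2*x)) x := h1'
    have hin : HasDerivAt (fun y : ℝ => -2*β*y^2) (-2*β*(2*x)) x := by
      simpa [mul_assoc] using hsq.const_mul (-2*β)
    have h2 : HasDerivAt (fun y : ℝ => y * (Real.exp (-2*β*y^2) / (2*β)))
        (1 * (Real.exp (-2*β*x^2) / (2*β)) +
          x * (Real.exp (-2*β*x^2) * (-2*β*(2*x)) / (2*β))) x :=
      (hasDerivAt_id x).mul (hin.exp.div_const (2*β))
    have h3 := h1.add h2
    refine h3.congr_deriv ?_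
    rw [Real.sqrt_sq hx]
    field_simp
    ring
  -- derivative of g everywhere
  have hgderiv : ∀ x : ℝ, HasDerivAt g (Real.exp (-2*β*x^2) / (2*β)) x := by
    intro x
    have hI2 : HasDerivAt (fun y => ∫ t in (0:ℝ)..y, Real.exp (-t^2))
        (Real.exp (-(x * Real.sqrt (2*β))^2)) (x * Real.sqrt (2*β)) :=
      intervalIntegral.integral_hasDerivAt_right (hcont2.intervalIntegrable _ _)
        hcont2.aestronglyMeasurable.stronglyMeasurableAtFilter hcont2.continuousAt
    have hlin : HasDerivAt (fun y : ℝ => y * Real.sqrt (2*β)) (Real.sqrt (2*β)) x := by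
      simpa using (hasDerivAt_id x).mul_const (Real.sqrt (2*β))
    have h1' := HasDerivAt.comp_of_eq (x := x) (hh₂ := hI2) (hh := hlin) rfl
    have h1 := h1'.div_const ((2*β) * Real.sqrt (2*β))
    refine h1.congr_deriv ?_
    have hsq : (x * Real.sqrt (2*β))^2 = 2*β*x^2 := by
      rw [mul_pow, Real.sq_sqrt ha.le]; ring
    rw [hsq]
    field_simp
  have hcf : ContinuousOn f (Set.Icc 0 τ) := by
    intro x hx
    exact ((hfderiv x hx.1).continuousAt).continuousWithinAt
  have hcg : ContinuousOn g (Set.Icc 0 τ) := by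
    intro x hx
    exact ((hgderiv x).continuousAt).continuousWithinAt
  have h0 : f 0 = g 0 := by
    simp [hf_def, hg_def]
  have := eq_of_has_deriv_right_eq
    (f' := fun x => Real.exp (-2*β*x^2) / (2*β))
    (fun x hx => (hfderiv x hx.1).hasDerivWithinAt)
    (fun x _ => (hgderiv x).hasDerivWithinAt) hcf hcg h0
  exact this τ ⟨hτ, le_rfl⟩

theorem airy_GUE_sff (β τ : ℝ) (hβ : 0 < β) (hτ : 0 ≤ τ) :
    (1 / Real.pi) * (∫ E in (0:ℝ)..τ^2, Real.exp (-2*β*E) * Real.sqrt E) +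
      (τ / Real.pi) * (∫ E in Set.Ioi (τ^2), Real.exp (-2*β*E)) =
      erf (τ * Real.sqrt (2*β)) / (2 * (2*β) ^ ((3:ℝ)/2) * Real.sqrt Real.pi) := by
  have ha : (0:ℝ) < 2*β := by linarith
  have hsa : 0 < Real.sqrt (2*β) := Real.sqrt_pos.mpr ha
  have hpi : 0 < Real.pi := Real.pi_pos
  have hspi : 0 < Real.sqrt Real.pi := Real.sqrt_pos.mpr hpi
  have hrpow : (2*β) ^ ((3:ℝ)/2) = (2*β) * Real.sqrt (2*β) := by
    rw [show (3:ℝ)/2 = 1 + 1/2 by norm_num, Real.rpow_add ha, Real.rpow_one,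
      ← Real.sqrt_eq_rpow]
  rw [ioi_exp_integral β (τ^2) hβ, hrpow]
  have hkey := key_identity β τ hβ hτ
  have hI1 : (∫ E in (0:ℝ)..τ^2, Real.exp (-2*β*E) * Real.sqrt E)
      = (∫ t in (0:ℝ)..τ * Real.sqrt (2*β), Real.exp (-t^2)) / ((2*β) * Real.sqrt (2*β))
        - τ * (Real.exp (-2*β*τ^2) / (2*β)) := by linarith
  rw [hI1, erf]
  set H := ∫ t in (0:ℝ)..τ * Real.sqrt (2*β), Real.exp (-t^2) with hH
  set e := Real.exp (-2*β*τ^2) with he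
  set s := Real.sqrt (2*β) with hs
  set sp := Real.sqrt Real.pi with hsp
  have h1 : sp * sp = Real.pi := Real.mul_self_sqrt hpi.le
  rw [← h1]
  have hs0 : s ≠ 0 := hsa.ne'
  have hsp0 : sp ≠ 0 := hspi.ne'
  have ha0 : (2:ℝ)*β ≠ 0 := ha.ne'
  field_simp
  ring
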